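/- Let T > 0, i a natural number. There exists a constant C (depending only on T and i) such that for every positive integer n with ε = T/n, grid t_k = kε, τ(t) = t_k and τ̄(t) = t_{k+1} on [t_k, t_{k+1}), and every twice continuously differentiable f : [0,T] → ℝ: | (i+1) ∫₀^T (τ̄(t) − t)^i f(τ(t)) dt − ε^i ∫₀^T f(t) dt + (ε^{i+1}/2) ∫₀^T f′(t) dt | ≤ C ε^{i+2} sup_{t∈[0,T]} |f″(t)|. -/

import Mathlib

open MeasureTheory Set intervalIntegral

-- elementary integral computations
lemma aux_int_pow_sub_right (a b : ℝ) (m : ℕ) :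
    ∫ t in a..b, (t - a) ^ m = (b - a) ^ (m+1) / (m+1) := by
  rw [intervalIntegral.integral_comp_sub_right (fun x => x ^ m) a]
  simp [integral_pow]

lemma aux_int_pow_sub_left (a b : ℝ) (m : ℕ) :
    ∫ t in a..b, (b - t) ^ m = (b - a) ^ (m+1) / (m+1) := by
  rw [intervalIntegral.integral_comp_sub_left (fun x => x ^ m) b]
  simp [integral_pow]

lemma aux_int_lin (a b : ℝ) : ∫ t in a..b, (t - a) = (b - a) ^ 2 / 2 := by
  rw [intervalIntegral.integral_sub intervalIntegrable_id intervalIntegrable_const,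
    integral_id, intervalIntegral.integral_const]
  simp [smul_eq_mul]; ring

lemma aux_int_quad (a b : ℝ) : ∫ t in a..b, (t - a) ^ 2 = (b - a) ^ 3 / 3 := by
  rw [intervalIntegral.integral_comp_sub_right (fun x => x ^ 2) a, integral_pow]
  norm_num

lemma aux_ftc {T : ℝ} {F F' : ℝ → ℝ}
    (hF : ∀ t ∈ Icc (0:ℝ) T, HasDerivWithinAt F (F' t) (Icc (0:ℝ) T) t)
    (hF' : ContinuousOn F' (Icc (0:ℝ) T))
    {a b : ℝ} (ha : 0 ≤ a) (hab : a ≤ b) (hb : b ≤ T) :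
    ∫ t in a..b, F' t = F b - F a := by
  have hsub : Icc a b ⊆ Icc (0:ℝ) T := Icc_subset_Icc ha hb
  apply integral_eq_sub_of_hasDeriv_right_of_le hab
  · exact fun t ht => ((hF t (hsub ht)).mono hsub).continuousWithinAt
  · intro x hx
    have hx0 : 0 < x := lt_of_le_of_lt ha hx.1
    have hxT : x < T := lt_of_lt_of_le hx.2 hb
    exact (((hF x (hsub (Ioo_subset_Icc_self hx))).hasDerivAt
      (Icc_mem_nhds hx0 hxT)).hasDerivWithinAt)
  · exact (hF'.mono (by rw [uIcc_of_le hab]; exact hsub)).intervalIntegrable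

lemma aux_lip {T M : ℝ} {f' f'' : ℝ → ℝ}
    (hf' : ∀ t ∈ Icc (0:ℝ) T, HasDerivWithinAt f' (f'' t) (Icc (0:ℝ) T) t)
    (hM : ∀ t ∈ Icc (0:ℝ) T, |f'' t| ≤ M)
    {a s : ℝ} (ha : a ∈ Icc (0:ℝ) T) (hs : s ∈ Icc (0:ℝ) T) :
    |f' s - f' a| ≤ M * |s - a| :=
  Convex.norm_image_sub_le_of_norm_hasDerivWithin_le hf' hM (convex_Icc 0 T) ha hs

lemma aux_taylor_pt {T M : ℝ} {f f' f'' : ℝ → ℝ}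
    (hf : ∀ t ∈ Icc (0:ℝ) T, HasDerivWithinAt f (f' t) (Icc (0:ℝ) T) t)
    (hf' : ∀ t ∈ Icc (0:ℝ) T, HasDerivWithinAt f' (f'' t) (Icc (0:ℝ) T) t)
    (hM : ∀ t ∈ Icc (0:ℝ) T, |f'' t| ≤ M)
    {a t : ℝ} (ha : 0 ≤ a) (hat : a ≤ t) (ht : t ≤ T) :
    |f t - f a - f' a * (t - a)| ≤ M * (t - a) ^ 2 / 2 := by
  have hf'cont : ContinuousOn f' (Icc (0:ℝ) T) :=
    fun s hs => (hf' s hs).continuousWithinAt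
  have hsub : Icc a t ⊆ Icc (0:ℝ) T := Icc_subset_Icc ha ht
  have hmemA : a ∈ Icc (0:ℝ) T := ⟨ha, hat.trans ht⟩
  have h1 : ∫ s in a..t, f' s = f t - f a := aux_ftc hf hf'cont ha hat ht
  have hint1 : IntervalIntegrable f' volume a t :=
    (hf'cont.mono (by rw [uIcc_of_le hat]; exact hsub)).intervalIntegrable
  have hint2 : IntervalIntegrable (fun _ : ℝ => f' a) volume a t :=
    intervalIntegrable_const
  have key : f t - f a - f' a * (t - a) = ∫ s in a..t, (f' s - f' a) := by
    rw [intervalIntegral.integral_sub hint1 hint2, h1, intervalIntegral.integral_const]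
    simp [smul_eq_mul]; ring
  have hintsub : IntervalIntegrable (fun s => f' s - f' a) volume a t := hint1.sub hint2
  have hintabs : IntervalIntegrable (fun s => |f' s - f' a|) volume a t := hintsub.abs
  have hintlin : IntervalIntegrable (fun s => M * (s - a)) volume a t :=
    (intervalIntegrable_id.sub intervalIntegrable_const).const_mul M
  calc |f t - f a - f' a * (t - a)| = |∫ s in a..t, (f' s - f' a)| := by rw [key]
    _ ≤ ∫ s in a..t, |f' s - f' a| := intervalIntegral.abs_integral_le_integral_abs hat
    _ ≤ ∫ s in a..t, M * (s - a) := by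
        apply intervalIntegral.integral_mono_on hat hintabs hintlin
        intro s hs
        have h1 := aux_lip hf' hM hmemA (hsub hs)
        have h2 : |s - a| = s - a := abs_of_nonneg (sub_nonneg.mpr hs.1)
        rw [h2] at h1; exact h1
    _ = M * (t - a) ^ 2 / 2 := by
        rw [intervalIntegral.integral_const_mul]
        have h : ∫ x in a..t, (x - a) = (t - a) ^ 2 / 2 := aux_int_lin a t
        rw [h]; ring

lemma aux_taylor1 {T M : ℝ} {f' f'' : ℝ → ℝ}
    (hf' : ∀ t ∈ Icc (0:ℝ) T, HasDerivWithinAt f' (f'' t) (Icc (0:ℝ) T) t)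
    (hM : ∀ t ∈ Icc (0:ℝ) T, |f'' t| ≤ M)
    {a b : ℝ} (ha : 0 ≤ a) (hab : a ≤ b) (hb : b ≤ T) :
    |(∫ t in a..b, f' t) - (b - a) * f' a| ≤ M * (b - a) ^ 2 / 2 := by
  have hf'cont : ContinuousOn f' (Icc (0:ℝ) T) :=
    fun s hs => (hf' s hs).continuousWithinAt
  have hsub : Icc a b ⊆ Icc (0:ℝ) T := Icc_subset_Icc ha hb
  have hmemA : a ∈ Icc (0:ℝ) T := ⟨ha, hab.trans hb⟩
  have hint1 : IntervalIntegrable f' volume a b :=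
    (hf'cont.mono (by rw [uIcc_of_le hab]; exact hsub)).intervalIntegrable
  have hint2 : IntervalIntegrable (fun _ : ℝ => f' a) volume a b :=
    intervalIntegrable_const
  have key : (∫ t in a..b, f' t) - (b - a) * f' a = ∫ s in a..b, (f' s - f' a) := by
    rw [intervalIntegral.integral_sub hint1 hint2, intervalIntegral.integral_const]
    simp [smul_eq_mul]
  have hintsub : IntervalIntegrable (fun s => f' s - f' a) volume a b := hint1.sub hint2
  have hintlin : IntervalIntegrable (fun s => M * (s - a)) volume a b :=
    (intervalIntegrable_id.sub intervalIntegrable_const).const_mul M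
  calc |(∫ t in a..b, f' t) - (b - a) * f' a| = |∫ s in a..b, (f' s - f' a)| := by rw [key]
    _ ≤ ∫ s in a..b, |f' s - f' a| := intervalIntegral.abs_integral_le_integral_abs hab
    _ ≤ ∫ s in a..b, M * (s - a) := by
        apply intervalIntegral.integral_mono_on hab hintsub.abs hintlin
        intro s hs
        have h1 := aux_lip hf' hM hmemA (hsub hs)
        have h2 : |s - a| = s - a := abs_of_nonneg (sub_nonneg.mpr hs.1)
        rw [h2] at h1; exact h1
    _ = M * (b - a) ^ 2 / 2 := by
        rw [intervalIntegral.integral_const_mul]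
        have h : ∫ x in a..b, (x - a) = (b - a) ^ 2 / 2 := aux_int_lin a b
        rw [h]; ring

lemma aux_taylor2 {T M : ℝ} {f f' f'' : ℝ → ℝ}
    (hf : ∀ t ∈ Icc (0:ℝ) T, HasDerivWithinAt f (f' t) (Icc (0:ℝ) T) t)
    (hf' : ∀ t ∈ Icc (0:ℝ) T, HasDerivWithinAt f' (f'' t) (Icc (0:ℝ) T) t)
    (hM : ∀ t ∈ Icc (0:ℝ) T, |f'' t| ≤ M)
    {a b : ℝ} (ha : 0 ≤ a) (hab : a ≤ b) (hb : b ≤ T) :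
    |(∫ t in a..b, f t) - ((b - a) * f a + (b - a) ^ 2 / 2 * f' a)|
      ≤ M * (b - a) ^ 3 / 6 := by
  have hfcont : ContinuousOn f (Icc (0:ℝ) T) :=
    fun s hs => (hf s hs).continuousWithinAt
  have hsub : Icc a b ⊆ Icc (0:ℝ) T := Icc_subset_Icc ha hb
  have hint1 : IntervalIntegrable f volume a b :=
    (hfcont.mono (by rw [uIcc_of_le hab]; exact hsub)).intervalIntegrable
  have hint2 : IntervalIntegrable (fun t : ℝ => f a + f' a * (t - a)) volume a b :=
    (intervalIntegrable_const.add
      ((intervalIntegrable_id.sub intervalIntegrable_const).const_mul (f' a)))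
  have hlinint : ∫ t in a..b, (t - a) = (b - a) ^ 2 / 2 := by
    exact aux_int_lin a b
  have key : (∫ t in a..b, f t) - ((b - a) * f a + (b - a) ^ 2 / 2 * f' a)
      = ∫ t in a..b, (f t - (f a + f' a * (t - a))) := by
    rw [intervalIntegral.integral_sub hint1 hint2, intervalIntegral.integral_add
      intervalIntegrable_const
      ((intervalIntegrable_id.sub intervalIntegrable_const).const_mul (f' a)),
      intervalIntegral.integral_const, intervalIntegral.integral_const_mul, hlinint]
    simp [smul_eq_mul]; ring
  have hintsub : IntervalIntegrable (fun t => f t - (f a + f' a * (t - a))) volume a b :=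
    hint1.sub hint2
  have hintquad : IntervalIntegrable (fun t => M * (t - a) ^ 2 / 2) volume a b := by
    apply ContinuousOn.intervalIntegrable
    fun_prop
  calc |(∫ t in a..b, f t) - ((b - a) * f a + (b - a) ^ 2 / 2 * f' a)|
      = |∫ t in a..b, (f t - (f a + f' a * (t - a)))| := by rw [key]
    _ ≤ ∫ t in a..b, |f t - (f a + f' a * (t - a))| :=
        intervalIntegral.abs_integral_le_integral_abs hab
    _ ≤ ∫ t in a..b, M * (t - a) ^ 2 / 2 := by
        apply intervalIntegral.integral_mono_on hab hintsub.abs hintquad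
        intro t ht
        have h1 := aux_taylor_pt hf hf' hM ha ht.1 (le_trans ht.2 hb)
        have e : f t - (f a + f' a * (t - a)) = f t - f a - f' a * (t - a) := by ring
        rw [e]; exact h1
    _ = M * (b - a) ^ 3 / 6 := by
        have h2 : ∫ t in a..b, (t - a) ^ 2 = (b - a) ^ 3 / 3 := aux_int_quad a b
        have : (fun t => M * (t - a) ^ 2 / 2) = fun t => (M / 2) * (t - a) ^ 2 := by
          funext t; ring
        rw [this, intervalIntegral.integral_const_mul, h2]; ring

lemma aux_est {T M : ℝ} {f f' f'' : ℝ → ℝ} (i : ℕ)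
    (hf : ∀ t ∈ Icc (0:ℝ) T, HasDerivWithinAt f (f' t) (Icc (0:ℝ) T) t)
    (hf' : ∀ t ∈ Icc (0:ℝ) T, HasDerivWithinAt f' (f'' t) (Icc (0:ℝ) T) t)
    (hM : ∀ t ∈ Icc (0:ℝ) T, |f'' t| ≤ M)
    {A B ε : ℝ} (hA : 0 ≤ A) (hε : 0 < ε) (hB : B = A + ε) (hBT : B ≤ T) :
    |ε^(i+1) * f A - ε^i * (∫ t in A..B, f t) + ε^(i+1)/2 * (∫ t in A..B, f' t)|
      ≤ M * ε^(i+3) := by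
  have hAB : A ≤ B := by rw [hB]; linarith
  have hBA : B - A = ε := by rw [hB]; ring
  have hM0 : 0 ≤ M := le_trans (abs_nonneg _) (hM 0 ⟨le_rfl, by linarith⟩)
  set r : ℝ := (∫ t in A..B, f t) - (ε * f A + ε^2/2 * f' A) with hrdef
  set s : ℝ := (∫ t in A..B, f' t) - ε * f' A with hsdef
  have hr : |r| ≤ M * ε^3/6 := by
    have h := aux_taylor2 hf hf' hM hA hAB hBT
    rw [hBA] at h
    simpa [hrdef, mul_comm] using h
  have hs : |s| ≤ M * ε^2/2 := by
    have h := aux_taylor1 hf' hM hA hAB hBT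
    rw [hBA] at h
    simpa [hsdef, mul_comm] using h
  have key : ε^(i+1) * f A - ε^i * (∫ t in A..B, f t) + ε^(i+1)/2 * (∫ t in A..B, f' t)
      = -(ε^i * r) + ε^(i+1)/2 * s := by
    rw [hrdef, hsdef]; ring
  rw [key]
  calc |-(ε^i * r) + ε^(i+1)/2 * s| ≤ |ε^i * r| + |ε^(i+1)/2 * s| := by
        refine (abs_add_le _ _).trans_eq ?_
        rw [abs_neg]
    _ = ε^i * |r| + ε^(i+1)/2 * |s| := by
        rw [abs_mul, abs_mul, abs_of_nonneg (pow_nonneg hε.le i),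
          abs_of_nonneg (by positivity : (0:ℝ) ≤ ε^(i+1)/2)]
    _ ≤ ε^i * (M * ε^3/6) + ε^(i+1)/2 * (M * ε^2/2) := by
        refine add_le_add (mul_le_mul_of_nonneg_left hr (by positivity))
          (mul_le_mul_of_nonneg_left hs (by positivity))
    _ ≤ M * ε^(i+3) := by
        have heq : ε^i * (M * ε^3/6) + ε^(i+1)/2 * (M * ε^2/2)
            = (5/12) * (M * ε^(i+3)) := by ring
        have hpos : 0 ≤ M * ε^(i+3) := by positivity
        rw [heq]; linarith

theorem stmt_10 (T : ℝ) (hT : 0 < T) (i : ℕ) :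
    ∃ C : ℝ, ∀ n : ℕ, 0 < n → ∀ ε : ℝ, ε = T / n →
      ∀ τ τ' : ℝ → ℝ,
        (∀ k : ℕ, k < n → ∀ t ∈ Ico ((k:ℝ)*ε) (((k:ℝ)+1)*ε), τ t = (k:ℝ)*ε) →
        (∀ k : ℕ, k < n → ∀ t ∈ Ico ((k:ℝ)*ε) (((k:ℝ)+1)*ε), τ' t = ((k:ℝ)+1)*ε) →
      ∀ f f' f'' : ℝ → ℝ, ∀ M : ℝ,
        (∀ t ∈ Icc (0:ℝ) T, HasDerivWithinAt f (f' t) (Icc (0:ℝ) T) t) →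
        (∀ t ∈ Icc (0:ℝ) T, HasDerivWithinAt f' (f'' t) (Icc (0:ℝ) T) t) →
        ContinuousOn f'' (Icc (0:ℝ) T) →
        (∀ t ∈ Icc (0:ℝ) T, |f'' t| ≤ M) →
        |((i:ℝ)+1) * (∫ t in (0:ℝ)..T, (τ' t - t)^i * f (τ t))
            - ε^i * (∫ t in (0:ℝ)..T, f t)
            + (ε^(i+1)/2) * (∫ t in (0:ℝ)..T, f' t)|
          ≤ C * ε^(i+2) * M := by
  refine ⟨T, ?_⟩
  intro n hn ε hεdef τ τ' hτ hτ' f f' f'' M hf hf' hf''c hM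
  have hnpos : (0:ℝ) < n := Nat.cast_pos.mpr hn
  have hε : 0 < ε := hεdef ▸ div_pos hT hnpos
  have hnε : (n:ℝ) * ε = T := by rw [hεdef]; field_simp
  have hM0 : 0 ≤ M := le_trans (abs_nonneg _) (hM 0 ⟨le_rfl, hT.le⟩)
  set a : ℕ → ℝ := fun k => (k:ℝ) * ε with ha
  have ha0 : a 0 = 0 := by simp [ha]
  have han : a n = T := by simp [ha, hnε]
  have hastep : ∀ k : ℕ, a (k+1) = a k + ε := by
    intro k; simp only [ha]; push_cast; ring
  have hanonneg : ∀ k : ℕ, 0 ≤ a k := fun k => by positivity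
  have haT : ∀ k : ℕ, k ≤ n → a k ≤ T := by
    intro k hk
    rw [← hnε]
    exact mul_le_mul_of_nonneg_right (Nat.cast_le.mpr hk) hε.le
  have hale : ∀ k : ℕ, a k ≤ a (k+1) := fun k => by rw [hastep]; linarith
  have hfc : ContinuousOn f (Icc (0:ℝ) T) := fun t ht => (hf t ht).continuousWithinAt
  have hf'c : ContinuousOn f' (Icc (0:ℝ) T) := fun t ht => (hf' t ht).continuousWithinAt
  have hsub : ∀ k : ℕ, k < n → Icc (a k) (a (k+1)) ⊆ Icc (0:ℝ) T :=
    fun k hk => Icc_subset_Icc (hanonneg k) (haT (k+1) hk)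
  have hint_f : ∀ k < n, IntervalIntegrable f volume (a k) (a (k+1)) := by
    intro k hk
    exact (hfc.mono (by rw [uIcc_of_le (hale k)]; exact hsub k hk)).intervalIntegrable
  have hint_f' : ∀ k < n, IntervalIntegrable f' volume (a k) (a (k+1)) := by
    intro k hk
    exact (hf'c.mono (by rw [uIcc_of_le (hale k)]; exact hsub k hk)).intervalIntegrable
  -- the step-function integrand
  set F : ℝ → ℝ := fun t => (τ' t - t)^i * f (τ t) with hF
  have hae : ∀ k : ℕ, k < n → ∀ᵐ x : ℝ ∂volume,
      x ∈ uIoc (a k) (a (k+1)) → F x = (a (k+1) - x)^i * f (a k) := by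
    intro k hk
    have hB : ∀ᵐ x : ℝ ∂volume, x ≠ a (k+1) := by
      rw [ae_iff]
      convert Real.volume_singleton (a := a (k+1)) using 2
      ext x; simp
    filter_upwards [hB] with x hx hxI
    rw [uIoc_of_le (hale k)] at hxI
    have hup : a (k+1) = ((k:ℝ)+1)*ε := by simp only [ha]; push_cast; ring
    have hxIco : x ∈ Ico ((k:ℝ)*ε) (((k:ℝ)+1)*ε) :=
      ⟨hxI.1.le, hup ▸ lt_of_le_of_ne hxI.2 hx⟩
    rw [hF]
    simp only
    rw [hτ k hk x hxIco, hτ' k hk x hxIco]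
    simp only [ha]
    push_cast
    ring_nf
  have hint_F : ∀ k < n, IntervalIntegrable F volume (a k) (a (k+1)) := by
    intro k hk
    have hg : IntervalIntegrable (fun x => (a (k+1) - x)^i * f (a k)) volume (a k) (a (k+1)) := by
      apply ContinuousOn.intervalIntegrable; fun_prop
    apply hg.congr_ae
    filter_upwards [ae_restrict_mem measurableSet_uIoc,
      ae_restrict_of_ae (hae k hk)] with x h1 h2
    exact (h2 h1).symm
  have heqF : ∀ k : ℕ, k < n →
      ∫ t in a k..a (k+1), F t = ε^(i+1) / ((i:ℝ)+1) * f (a k) := by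
    intro k hk
    rw [intervalIntegral.integral_congr_ae (hae k hk)]
    rw [intervalIntegral.integral_mul_const]
    have := aux_int_pow_sub_left (a k) (a (k+1)) i
    rw [this, hastep k]
    ring_nf
  -- splitting the three integrals
  have hsplitF : ∫ t in (0:ℝ)..T, F t
      = ∑ k ∈ Finset.range n, ∫ t in a k..a (k+1), F t := by
    rw [intervalIntegral.sum_integral_adjacent_intervals hint_F, ha0, han]
  have hsplitf : ∫ t in (0:ℝ)..T, f t
      = ∑ k ∈ Finset.range n, ∫ t in a k..a (k+1), f t := by
    rw [intervalIntegral.sum_integral_adjacent_intervals hint_f, ha0, han]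
  have hsplitf' : ∫ t in (0:ℝ)..T, f' t
      = ∑ k ∈ Finset.range n, ∫ t in a k..a (k+1), f' t := by
    rw [intervalIntegral.sum_integral_adjacent_intervals hint_f', ha0, han]
  rw [hsplitF, hsplitf, hsplitf']
  have hsum : ((i:ℝ)+1) * (∑ k ∈ Finset.range n, ∫ t in a k..a (k+1), F t)
      - ε^i * (∑ k ∈ Finset.range n, ∫ t in a k..a (k+1), f t)
      + ε^(i+1)/2 * (∑ k ∈ Finset.range n, ∫ t in a k..a (k+1), f' t)
      = ∑ k ∈ Finset.range n,
        (ε^(i+1) * f (a k) - ε^i * (∫ t in a k..a (k+1), f t)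
          + ε^(i+1)/2 * (∫ t in a k..a (k+1), f' t)) := by
    rw [Finset.mul_sum, Finset.mul_sum, Finset.mul_sum,
      ← Finset.sum_sub_distrib, ← Finset.sum_add_distrib]
    apply Finset.sum_congr rfl
    intro k hk
    rw [heqF k (Finset.mem_range.mp hk)]
    have hi : ((i:ℝ)+1) ≠ 0 := by positivity
    field_simp
  rw [hsum]
  calc |∑ k ∈ Finset.range n,
        (ε^(i+1) * f (a k) - ε^i * (∫ t in a k..a (k+1), f t)
          + ε^(i+1)/2 * (∫ t in a k..a (k+1), f' t))|
      ≤ ∑ k ∈ Finset.range n,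
        |ε^(i+1) * f (a k) - ε^i * (∫ t in a k..a (k+1), f t)
          + ε^(i+1)/2 * (∫ t in a k..a (k+1), f' t)| :=
        Finset.abs_sum_le_sum_abs _ _
    _ ≤ ∑ _k ∈ Finset.range n, M * ε^(i+3) := by
        apply Finset.sum_le_sum
        intro k hk
        exact aux_est i hf hf' hM (hanonneg k) hε (hastep k)
          (haT (k+1) (Finset.mem_range.mp hk))
    _ = (n:ℝ) * (M * ε^(i+3)) := by
        rw [Finset.sum_const, Finset.card_range, nsmul_eq_mul]
    _ = T * ε^(i+2) * M := by
        rw [← hnε]; ring
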